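/- Let n ≥ 1 and let A ∈ ℝ^{n×n} be symmetric with zero diagonal, and set Z = Σ_{i<j} |A_{i,j}|. Suppose P ∈ {-1,1}^{k×n} and a diagonal matrix W ∈ ℝ^{k×k} satisfy PᵀWP ⊙ J = A, let r be the number of nonzero diagonal entries of W, and assume r > 1 and that W is L0-optimal: for every k' ≥ 1, every P' ∈ {-1,1}^{k'×n} and diagonal W' ∈ ℝ^{k'×k'} with P'ᵀW'P' ⊙ J = A, the number of nonzero diagonal entries of W' is at least r. Then every diagonal entry of W satisfies |W_{a,a}| ≤ Z · (r − 1)^{(r+1)/2}. -/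

import Mathlib

open Matrix

/-- The intrinsic coupling matrix `J` with `J i j = 1` for `i ≠ j` and `0` on the diagonal. -/
def Jmat (n : ℕ) : Matrix (Fin n) (Fin n) ℝ :=
  fun i j => if i = j then 0 else 1

/-- `A` is constructible in `k` pulses: there are `P ∈ {-1,1}^{k×n}` and a diagonal
`W ∈ ℝ^{k×k}` with `Pᵀ W P ⊙ J = A`. -/
def Constructible (n k : ℕ) (A : Matrix (Fin n) (Fin n) ℝ) : Prop :=
  ∃ (P : Matrix (Fin k) (Fin n) ℝ) (W : Matrix (Fin k) (Fin k) ℝ),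
    (∀ a i, P a i = 1 ∨ P a i = -1) ∧ W.IsDiag ∧
      (Pᵀ * W * P).hadamard (Jmat n) = A


lemma amgm {m : ℕ} (hm : 0 < m) (x : Fin m → ℝ) (hx : ∀ i, 0 ≤ x i) :
    ∏ i, x i ≤ ((∑ i, x i) / m) ^ m := by
  have hm' : (0:ℝ) < m := by exact_mod_cast hm
  have h1 : ∀ i ∈ (Finset.univ : Finset (Fin m)), (0:ℝ) ≤ (1:ℝ)/m := fun _ _ => by positivity
  have h2 : ∑ _i : Fin m, (1:ℝ)/m = 1 := by
    rw [Finset.sum_const, Finset.card_univ, Fintype.card_fin, nsmul_eq_mul]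
    field_simp
  have h3 := Real.geom_mean_le_arith_mean_weighted Finset.univ (fun _ => (1:ℝ)/m) x h1 h2
    (fun i _ => hx i)
  have h4 : ∑ i, (1:ℝ)/m * x i = (∑ i, x i) / m := by
    rw [Finset.sum_congr rfl (fun i _ => by ring_nf : ∀ i ∈ (Finset.univ : Finset (Fin m)), (1:ℝ)/m * x i = x i / m)]
    exact (Finset.sum_div _ _ _).symm
  rw [h4] at h3
  have h5 : (∏ i, x i ^ ((1:ℝ)/m)) ^ m = ∏ i, x i := by
    rw [← Finset.prod_pow]
    refine Finset.prod_congr rfl fun i _ => ?_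
    rw [← Real.rpow_natCast (x i ^ ((1:ℝ)/m)) m, ← Real.rpow_mul (hx i)]
    rw [one_div, inv_mul_cancel₀ (ne_of_gt hm'), Real.rpow_one]
  calc ∏ i, x i = (∏ i, x i ^ ((1:ℝ)/m)) ^ m := h5.symm
    _ ≤ ((∑ i, x i) / m) ^ m := by
        apply pow_le_pow_left₀ (Finset.prod_nonneg fun i _ => Real.rpow_nonneg (hx i) _) h3

lemma had_det {m : ℕ} (N : Matrix (Fin m) (Fin m) ℝ) (h : ∀ i j, |N i j| ≤ 1) :
    |N.det| ≤ (m:ℝ) ^ ((m:ℝ)/2) := by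
  rcases Nat.eq_zero_or_pos m with hm | hm
  · subst hm
    simp [Matrix.det_isEmpty]
  · have hm' : (0:ℝ) < m := by exact_mod_cast hm
    set G : Matrix (Fin m) (Fin m) ℝ := N * Nᵀ with hG
    have hGps : G.PosSemidef := by
      have := Matrix.posSemidef_self_mul_conjTranspose N
      rwa [Matrix.conjTranspose_eq_transpose_of_trivial] at this
    have hH : G.IsHermitian := hGps.1
    have hev : ∀ i, 0 ≤ hH.eigenvalues i := fun i => hGps.eigenvalues_nonneg i
    have hdet : G.det = ∏ i, hH.eigenvalues i := by
      simpa using hH.det_eq_prod_eigenvalues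
    have htr : G.trace = ∑ i, hH.eigenvalues i := by
      simpa using hH.trace_eq_sum_eigenvalues
    have htrb : G.trace ≤ (m:ℝ) * m := by
      rw [Matrix.trace]
      have : ∀ i : Fin m, G i i ≤ (m:ℝ) := by
        intro i
        have : G i i = ∑ j, N i j * N i j := by
          simp [hG, Matrix.mul_apply, Matrix.transpose_apply]
        rw [this]
        calc ∑ j, N i j * N i j ≤ ∑ _j : Fin m, (1:ℝ) := by
              apply Finset.sum_le_sum
              intro j _
              have := h i j
              nlinarith [abs_nonneg (N i j), le_abs_self (N i j), neg_abs_le (N i j)]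
          _ = m := by simp
      calc ∑ i, Matrix.diag G i ≤ ∑ _i : Fin m, (m:ℝ) := Finset.sum_le_sum fun i _ => this i
        _ = (m:ℝ) * m := by simp [mul_comm]
    have hprod : ∏ i, hH.eigenvalues i ≤ (m:ℝ)^m := by
      calc ∏ i, hH.eigenvalues i ≤ ((∑ i, hH.eigenvalues i) / m) ^ m := amgm hm _ hev
        _ ≤ (m:ℝ)^m := by
            apply pow_le_pow_left₀
            · exact div_nonneg (Finset.sum_nonneg fun i _ => hev i) hm'.le
            · rw [div_le_iff₀ hm']
              exact le_of_eq_of_le htr.symm htrb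
    have hsq : N.det ^ 2 ≤ (m:ℝ)^m := by
      have : N.det ^ 2 = G.det := by
        rw [hG, Matrix.det_mul, Matrix.det_transpose, sq]
      rw [this, hdet]; exact hprod
    have habs : |N.det| ≤ Real.sqrt ((m:ℝ)^m) := by
      rw [← Real.sqrt_sq_eq_abs]
      exact Real.sqrt_le_sqrt hsq
    calc |N.det| ≤ Real.sqrt ((m:ℝ)^m) := habs
      _ = (m:ℝ) ^ ((m:ℝ)/2) := by
          rw [Real.sqrt_eq_rpow, ← Real.rpow_natCast (m:ℝ) m, ← Real.rpow_mul hm'.le]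
          ring_nf


lemma quad_apply {k n : ℕ} (P : Matrix (Fin k) (Fin n) ℝ) (W : Matrix (Fin k) (Fin k) ℝ)
    (hWd : W.IsDiag) (i j : Fin n) :
    (Pᵀ * W * P) i j = ∑ a, W a a * (P a i * P a j) := by
  rw [Matrix.mul_apply]
  have hcol : ∀ c, (Pᵀ * W) i c = W c c * P c i := by
    intro c
    rw [Matrix.mul_apply]
    rw [Finset.sum_eq_single c]
    · rw [Matrix.transpose_apply]; ring
    · intro b _ hbc
      rw [hWd hbc, mul_zero]
    · intro hc; exact absurd (Finset.mem_univ c) hc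
  simp_rw [hcol]
  exact Finset.sum_congr rfl fun c _ => by ring

lemma det_update_bound {m : ℕ} (M : Matrix (Fin (m+1)) (Fin (m+1)) ℝ)
    (hpm : ∀ i j, M i j = 1 ∨ M i j = -1) (b : Fin (m+1) → ℝ) (j : Fin (m+1)) :
    |(M.updateCol j b).det| ≤ (∑ i, |b i|) * (m:ℝ) ^ ((m:ℝ)/2) := by
  rw [Matrix.det_succ_column (M.updateCol j b) j]
  refine le_trans (Finset.abs_sum_le_sum_abs _ _) ?_
  rw [Finset.sum_mul]
  apply Finset.sum_le_sum
  intro i _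
  rw [abs_mul, abs_mul]
  have h1 : |((-1:ℝ)) ^ ((i:ℕ) + (j:ℕ))| = 1 := by
    rw [abs_pow, abs_neg, abs_one, one_pow]
  have h2 : (M.updateCol j b) i j = b i := Matrix.updateCol_self
  have h3 : ((M.updateCol j b).submatrix i.succAbove j.succAbove) =
      M.submatrix i.succAbove j.succAbove := by
    ext x y
    rw [Matrix.submatrix_apply, Matrix.submatrix_apply,
      Matrix.updateCol_apply, if_neg (Fin.succAbove_ne j y)]
  rw [h1, h2, h3, one_mul]
  apply mul_le_mul (le_refl _)
  · apply had_det
    intro x y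
    rcases hpm (i.succAbove x) (j.succAbove y) with h | h <;>
      simp [Matrix.submatrix_apply, h]
  · exact abs_nonneg _
  · exact abs_nonneg _

abbrev PairT (n : ℕ) := {p : Fin n × Fin n // p.1 < p.2}

theorem stmt_12 (n k : ℕ) (hn : 1 ≤ n)
    (A : Matrix (Fin n) (Fin n) ℝ) (hAs : A.IsSymm) (hAd : ∀ i, A i i = 0)
    (Z : ℝ) (hZ : Z = ∑ i : Fin n, ∑ j : Fin n, if i < j then |A i j| else 0)
    (P : Matrix (Fin k) (Fin n) ℝ) (hP : ∀ a i, P a i = 1 ∨ P a i = -1)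
    (W : Matrix (Fin k) (Fin k) ℝ) (hWd : W.IsDiag)
    (hEq : (Pᵀ * W * P).hadamard (Jmat n) = A)
    (r : ℕ) (hr : r = (Finset.univ.filter fun a : Fin k => W a a ≠ 0).card)
    (hr1 : 1 < r)
    (hopt : ∀ k' : ℕ, 1 ≤ k' → ∀ P' : Matrix (Fin k') (Fin n) ℝ,
      (∀ a i, P' a i = 1 ∨ P' a i = -1) → ∀ W' : Matrix (Fin k') (Fin k') ℝ,
      W'.IsDiag → (P'ᵀ * W' * P').hadamard (Jmat n) = A →
      r ≤ (Finset.univ.filter fun a : Fin k' => W' a a ≠ 0).card) :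
    ∀ a : Fin k, |W a a| ≤ Z * ((r : ℝ) - 1) ^ (((r : ℝ) + 1) / 2) := by
  intro a0
  classical
  obtain ⟨m, rfl⟩ : ∃ m, r = m + 1 := ⟨r - 1, by omega⟩
  have hm1 : 1 ≤ m := by omega
  -- setup
  set S : Finset (Fin k) := Finset.univ.filter (fun a => W a a ≠ 0) with hSdef
  have hScard : S.card = m + 1 := hr.symm
  have hrk : m + 1 ≤ k := by
    rw [hr]
    calc (Finset.univ.filter fun a : Fin k => W a a ≠ 0).card ≤ Finset.univ.card :=
        Finset.card_filter_le _ _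
      _ = k := by simp
  have hk1 : 1 ≤ k := le_trans (by omega) hrk
  have hZnn : 0 ≤ Z := by
    rw [hZ]
    apply Finset.sum_nonneg; intro i _
    apply Finset.sum_nonneg; intro j _
    split <;> simp [abs_nonneg]
  have hbase : (0:ℝ) ≤ ((m+1:ℕ):ℝ) - 1 := by
    have : (1:ℝ) ≤ ((m+1:ℕ):ℝ) := by exact_mod_cast hr1.le
    linarith
  have hRHSnn : 0 ≤ Z * (((m+1:ℕ) : ℝ) - 1) ^ ((((m+1:ℕ) : ℝ) + 1) / 2) :=
    mul_nonneg hZnn (Real.rpow_nonneg hbase _)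
  by_cases ha0 : a0 ∈ S
  swap
  · have : W a0 a0 = 0 := by
      by_contra hne
      exact ha0 (Finset.mem_filter.mpr ⟨Finset.mem_univ _, hne⟩)
    rw [this, abs_zero]; exact hRHSnn
  -- key equation
  have key : ∀ i j : Fin n, i ≠ j → (∑ a, W a a * (P a i * P a j)) = A i j := by
    intro i j hij
    have h1 := congrFun (congrFun hEq i) j
    rw [Matrix.hadamard_apply] at h1
    rw [quad_apply P W hWd i j] at h1
    rw [← h1]
    simp [Jmat, hij]
  -- per-pair equation restricted to S
  have keyE : ∀ e : PairT n, ∑ a ∈ S, W a a * (P a e.1.1 * P a e.1.2) = A e.1.1 e.1.2 := by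
    intro e
    rw [← key _ _ (ne_of_lt e.2)]
    apply Finset.sum_subset (Finset.subset_univ S)
    intro x _ hx
    have : W x x = 0 := by
      by_contra hne
      exact hx (Finset.mem_filter.mpr ⟨Finset.mem_univ _, hne⟩)
    rw [this, zero_mul]
  -- Z as a sum over pairs
  have hZE : Z = ∑ e : PairT n, |A e.1.1 e.1.2| := by
    have h0 : (∑ p : Fin n × Fin n, if p.1 < p.2 then |A p.1 p.2| else 0)
        = ∑ i : Fin n, ∑ j : Fin n, if i < j then |A i j| else 0 := Fintype.sum_prod_type _
    rw [hZ, ← h0]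
    rw [show (∑ p : Fin n × Fin n, if p.1 < p.2 then |A p.1 p.2| else 0)
        = ∑ p ∈ Finset.univ.filter (fun p : Fin n × Fin n => p.1 < p.2), |A p.1 p.2|
      from (Finset.sum_filter _ _).symm]
    exact Finset.sum_subtype _ (fun p => by simp) _
  -- linear independence of the rows indexed by S
  have hLI : LinearIndependent ℝ
      (fun a : {x // x ∈ S} => (fun e : PairT n => P a.1 e.1.1 * P a.1 e.1.2)) := by
    rw [Fintype.linearIndependent_iff]
    intro g hg
    by_contra hne
    push_neg at hne
    obtain ⟨b, hb⟩ := hne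
    have hzS : ∀ i j : Fin n, i ≠ j →
        ∑ a : {x // x ∈ S}, g a * (P a.1 i * P a.1 j) = 0 := by
      intro i j hij
      have main : ∀ e : PairT n,
          ∑ a : {x // x ∈ S}, g a * (P a.1 e.1.1 * P a.1 e.1.2) = 0 := by
        intro e
        have h1 := congrFun hg e
        simpa [Finset.sum_apply] using h1
      rcases lt_or_gt_of_ne hij with h | h
      · exact main ⟨(i, j), h⟩
      · rw [← main ⟨(j, i), h⟩]
        exact Finset.sum_congr rfl fun a _ => by ring
    set t := W b.1 b.1 / g b with ht
    set c : Fin k → ℝ := fun a => if h : a ∈ S then g ⟨a, h⟩ else 0 with hc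
    set W' : Matrix (Fin k) (Fin k) ℝ := Matrix.diagonal (fun a => W a a - t * c a) with hW'
    have hW'd : W'.IsDiag := Matrix.isDiag_diagonal _
    have hcsum : ∀ i j : Fin n, i ≠ j → ∑ a : Fin k, c a * (P a i * P a j) = 0 := by
      intro i j hij
      have h1 : ∑ a : Fin k, c a * (P a i * P a j) = ∑ a ∈ S, c a * (P a i * P a j) := by
        symm
        apply Finset.sum_subset (Finset.subset_univ S)
        intro x _ hx
        rw [hc]; simp only [dif_neg hx, zero_mul]
      have h2 : ∑ a ∈ S, c a * (P a i * P a j)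
          = ∑ a : {x // x ∈ S}, g a * (P a.1 i * P a.1 j) := by
        rw [← Finset.sum_coe_sort S]
        exact Finset.sum_congr rfl fun a _ => by rw [hc]; simp only [dif_pos a.2]
      rw [h1, h2, hzS i j hij]
    have hEq' : (Pᵀ * W' * P).hadamard (Jmat n) = A := by
      ext i j
      by_cases hij : i = j
      · subst hij
        rw [Matrix.hadamard_apply]
        simp [Jmat, hAd]
      · rw [Matrix.hadamard_apply, quad_apply P W' hW'd i j]
        have hdiagA : ∀ a : Fin k, W' a a = W a a - t * c a := fun a =>
          Matrix.diagonal_apply_eq _ a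
        simp only [hdiagA]
        have : ∑ a : Fin k, (W a a - t * c a) * (P a i * P a j)
            = (∑ a : Fin k, W a a * (P a i * P a j))
              - t * ∑ a : Fin k, c a * (P a i * P a j) := by
          rw [Finset.mul_sum, ← Finset.sum_sub_distrib]
          exact Finset.sum_congr rfl fun a _ => by ring
        rw [this, hcsum i j hij, key i j hij]
        simp [Jmat, hij]
    have hcard := hopt k hk1 P hP W' hW'd hEq'
    have hsub : (Finset.univ.filter fun a => W' a a ≠ 0) ⊆ S.erase b.1 := by
      intro x hx
      have hx' : W' x x ≠ 0 := (Finset.mem_filter.mp hx).2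
      rw [Finset.mem_erase]
      constructor
      · rintro rfl
        apply hx'
        rw [hW', Matrix.diagonal_apply_eq, hc]
        simp only [dif_pos b.2, ht]
        have : (b : {x // x ∈ S}) = ⟨b.1, b.2⟩ := rfl
        rw [← this]
        field_simp
        ring
      · by_contra hxS
        apply hx'
        have hW0 : W x x = 0 := by
          by_contra hne
          exact hxS (Finset.mem_filter.mpr ⟨Finset.mem_univ _, hne⟩)
        rw [hW', Matrix.diagonal_apply_eq, hW0, hc]
        simp only [dif_neg hxS]
        ring
    have hle : m + 1 ≤ (S.erase b.1).card := le_trans hcard (Finset.card_le_card hsub)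
    rw [Finset.card_erase_of_mem b.2, hScard] at hle
    omega
  -- matrix V and its rank
  set V : Matrix {x // x ∈ S} (PairT n) ℝ :=
    Matrix.of (fun a e => P a.1 e.1.1 * P a.1 e.1.2) with hVdef
  have hfinS : Fintype.card {x // x ∈ S} = m + 1 := by rw [Fintype.card_coe, hScard]
  have hVrank : V.rank = m + 1 := by
    have h1 : LinearIndependent ℝ (fun a : {x // x ∈ S} => V a) := hLI
    rw [h1.rank_matrix, hfinS]
  have hspan : Submodule.span ℝ (Set.range Vᵀ) = ⊤ := by
    apply Submodule.eq_top_of_finrank_eq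
    rw [show Set.range Vᵀ = Set.range V.col from rfl, ← Matrix.rank_eq_finrank_span_cols, hVrank, Module.finrank_pi, hfinS]
  obtain ⟨bset, hbsub, hbspan, hbLI⟩ := exists_linearIndependent ℝ (Set.range Vᵀ)
  have hbfin : bset.Finite := hbLI.setFinite
  haveI := hbfin.fintype
  let bas : Module.Basis bset ℝ ({x // x ∈ S} → ℝ) := Module.Basis.mk hbLI (by
    rw [Subtype.range_coe, hbspan, hspan])
  have hbcard : Fintype.card bset = m + 1 := by
    have h1 := Module.finrank_eq_card_basis bas
    rw [Module.finrank_pi, hfinS] at h1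
    omega
  -- equivalences and chosen columns
  let τ : Fin (m+1) ≃ {x // x ∈ S} := (Fintype.equivFinOfCardEq hfinS).symm
  let σ : Fin (m+1) ≃ bset := (Fintype.equivFinOfCardEq hbcard).symm
  have hchoice : ∀ x : bset, ∃ e : PairT n, Vᵀ e = (x : {x // x ∈ S} → ℝ) :=
    fun x => hbsub x.2
  choose col hcol using hchoice
  have hcolinj : Function.Injective col := by
    intro x y hxy
    apply Subtype.ext
    rw [← hcol x, ← hcol y, hxy]
  -- the square matrix M
  set M : Matrix (Fin (m+1)) (Fin (m+1)) ℝ :=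
    Matrix.of (fun c a' => (σ c : {x // x ∈ S} → ℝ) (τ a')) with hMdef
  have hMV : ∀ c a', M c a' = P (τ a').1 (col (σ c)).1.1 * P (τ a').1 (col (σ c)).1.2 := by
    intro c a'
    have h1 := congrFun (hcol (σ c)) (τ a')
    show (σ c : {x // x ∈ S} → ℝ) (τ a') = _
    rw [← h1]
    rfl
  have hrowsLI : LinearIndependent ℝ (fun c : Fin (m+1) => M c) := by
    have h1 : LinearIndependent ℝ (fun x : bset => (x : {x // x ∈ S} → ℝ)) := hbLI
    have h2 := h1.comp σ σ.injective
    let ℓ : ({x // x ∈ S} → ℝ) ≃ₗ[ℝ] (Fin (m+1) → ℝ) := LinearEquiv.funCongrLeft ℝ ℝ τ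
    have h3 := h2.map' ℓ.toLinearMap ℓ.ker
    exact h3
  have hMunit : IsUnit M := Matrix.linearIndependent_rows_iff_isUnit.mp hrowsLI
  have hMpm : ∀ c a', M c a' = 1 ∨ M c a' = -1 := by
    intro c a'
    rcases hP (τ a').1 (col (σ c)).1.1 with h2 | h2 <;>
      rcases hP (τ a').1 (col (σ c)).1.2 with h3 | h3 <;>
        rw [hMV c a', h2, h3] <;> norm_num
  -- integrality of the determinant
  have hdet1 : (1:ℝ) ≤ |M.det| := by
    set Mz : Matrix (Fin (m+1)) (Fin (m+1)) ℤ :=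
      Matrix.of (fun c a' => if M c a' = 1 then 1 else -1) with hMzdef
    have hmap : M = Mz.map (Int.cast) := by
      ext c a'
      rcases hMpm c a' with h | h <;> simp [Matrix.map_apply, hMzdef, h] <;> norm_num
    have hdet : M.det = ((Mz.det : ℤ) : ℝ) := by
      rw [hmap]
      have h1 := RingHom.map_det (Int.castRingHom ℝ) Mz
      simpa using h1.symm
    have hdz : Mz.det ≠ 0 := by
      intro h0
      have h2 : M.det = 0 := by rw [hdet, h0]; simp
      exact ((Matrix.isUnit_iff_isUnit_det M).mp hMunit).ne_zero h2
    rw [hdet, ← Int.cast_abs]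
    exact_mod_cast Int.one_le_abs hdz
  -- the linear system
  set wS : Fin (m+1) → ℝ := fun a' => W (τ a').1 (τ a').1 with hwSdef
  set bv : Fin (m+1) → ℝ := fun c => A (col (σ c)).1.1 (col (σ c)).1.2 with hbvdef
  have hMw : M *ᵥ wS = bv := by
    ext c
    show ∑ a', M c a' * wS a' = bv c
    have h1 : ∀ a', M c a' * wS a'
        = W (τ a').1 (τ a').1 * (P (τ a').1 (col (σ c)).1.1 * P (τ a').1 (col (σ c)).1.2) := by
      intro a'; rw [hMV c a']; ring
    rw [Finset.sum_congr rfl (fun a' _ => h1 a')]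
    rw [Equiv.sum_comp τ
      (fun a : {x // x ∈ S} => W a.1 a.1 * (P a.1 (col (σ c)).1.1 * P a.1 (col (σ c)).1.2))]
    rw [Finset.sum_coe_sort S
      (fun a => W a a * (P a (col (σ c)).1.1 * P a (col (σ c)).1.2))]
    exact keyE (col (σ c))
  have hcram : M.det • wS = Matrix.cramer M bv := by
    have hinj := Matrix.mulVec_injective_iff_isUnit.mpr hMunit
    apply hinj
    rw [Matrix.mulVec_smul, hMw, Matrix.mulVec_cramer]
  -- final bound
  set a' : Fin (m+1) := τ.symm ⟨a0, ha0⟩ with ha'def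
  have hwa : wS a' = W a0 a0 := by
    rw [hwSdef]
    simp [ha'def]
  have hcr := congrFun hcram a'
  have h5 : |W a0 a0| ≤ |(M.updateCol a' bv).det| := by
    calc |W a0 a0| = |wS a'| := by rw [hwa]
      _ ≤ |M.det| * |wS a'| := le_mul_of_one_le_left (abs_nonneg _) hdet1
      _ = |M.det * wS a'| := (abs_mul _ _).symm
      _ = |Matrix.cramer M bv a'| := by
          rw [show M.det * wS a' = (M.det • wS) a' from rfl, hcr]
      _ = |(M.updateCol a' bv).det| := by rw [Matrix.cramer_apply]
  have h6 := det_update_bound M hMpm bv a'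
  have hsumb : ∑ i, |bv i| ≤ Z := by
    rw [hZE]
    have hinj2 : Function.Injective (fun c : Fin (m+1) => col (σ c)) :=
      hcolinj.comp σ.injective
    calc ∑ i, |bv i|
        = ∑ e ∈ Finset.univ.image (fun c : Fin (m+1) => col (σ c)), |A e.1.1 e.1.2| := by
          rw [Finset.sum_image (fun x _ y _ h => hinj2 h)]
      _ ≤ ∑ e : PairT n, |A e.1.1 e.1.2| :=
          Finset.sum_le_sum_of_subset_of_nonneg (Finset.subset_univ _)
            (fun _ _ _ => abs_nonneg _)
  have hrpownn : (0:ℝ) ≤ (m:ℝ) ^ ((m:ℝ)/2) := Real.rpow_nonneg (by positivity) _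
  have hmR : (1:ℝ) ≤ (m:ℝ) := by exact_mod_cast hm1
  calc |W a0 a0| ≤ |(M.updateCol a' bv).det| := h5
    _ ≤ (∑ i, |bv i|) * (m:ℝ) ^ ((m:ℝ)/2) := h6
    _ ≤ Z * (m:ℝ) ^ ((m:ℝ)/2) := mul_le_mul_of_nonneg_right hsumb hrpownn
    _ ≤ Z * (((m+1:ℕ):ℝ) - 1) ^ ((((m+1:ℕ):ℝ) + 1) / 2) := by
        have hb : (((m+1:ℕ)):ℝ) - 1 = (m:ℝ) := by push_cast; ring
        rw [hb]
        apply mul_le_mul_of_nonneg_left _ hZnn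
        apply Real.rpow_le_rpow_of_exponent_le hmR
        push_cast
        linarith
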